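/- Under Assumptions A1 and A2, let d(λ,Λ*) = min_{λ*∈Λ*} ‖λ − λ*‖. For every ε > 0 there exists δ0 > 0 such that: if the step sizes {δ(k)} satisfy rule I with δ(k) < δ0 for all k, or if they satisfy rule II, then for every initial λ(0) ≥ 0 there exists a finite K0 such that the subgradient-algorithm iterates satisfy d(λ(k),Λ*) < ε and ‖x(k) − x*‖ < ε for all k ≥ K0. -/

import Mathlib

open scoped BigOperators

set_option linter.unusedSectionVars false
set_option linter.unusedVariables false
set_option linter.unnecessarySeqFocus false
set_option maxHeartbeats 4000000

lemma fiber_sum {S T : Type} [Fintype S] [Fintype T] [DecidableEq S]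
    (σ : T → S) (g : T → ℝ) :
    ∑ t, g t = ∑ s, ∑ t, if σ t = s then g t else 0 := by
  rw [Finset.sum_comm]
  refine Finset.sum_congr rfl fun t _ => ?_
  rw [Finset.sum_ite_eq]; simp

lemma tau_sum {S T : Type} [Fintype S] [Fintype T] [DecidableEq S] [DecidableEq T]
    (σ : T → S) (τ : S → T) (hτ : ∀ s, σ (τ s) = s) (xv : S → ℝ) (g : T → ℝ) (s : S) :
    ∑ t, (if σ t = s then g t * (if τ (σ t) = t then xv (σ t) else 0) else 0)
      = g (τ s) * xv s := by
  have : ∀ t, (if σ t = s then g t * (if τ (σ t) = t then xv (σ t) else 0) else 0)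
      = (if t = τ s then g (τ s) * xv s else 0) := by
    intro t
    by_cases ht : t = τ s
    · subst ht; simp [hτ s]
    · by_cases hs : σ t = s
      · have : ¬ (τ (σ t) = t) := by rw [hs]; exact fun h => ht h.symm
        rw [if_pos hs, if_neg this, if_neg ht, mul_zero]
      · rw [if_neg hs, if_neg ht]
  rw [Finset.sum_congr rfl fun t _ => this t, Finset.sum_ite_eq']
  simp

lemma tau_fiber {S T : Type} [Fintype S] [Fintype T] [DecidableEq S] [DecidableEq T]
    (σ : T → S) (τ : S → T) (hτ : ∀ s, σ (τ s) = s) (xv : S → ℝ) (s : S) :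
    ∑ t, (if σ t = s then (if τ (σ t) = t then xv (σ t) else 0) else 0) = xv s := by
  have := tau_sum σ τ hτ xv (fun _ => 1) s
  simpa using this

lemma lag_decomp {S T E : Type} [Fintype S] [Fintype T] [Fintype E]
    (H : E → T → ℝ) (c : E → ℝ) (U : S → ℝ → ℝ)
    (L : (S → ℝ) → (T → ℝ) → (E → ℝ) → ℝ)
    (hL : ∀ x y lam, L x y lam =
      ∑ s, U s (x s) + ∑ e, lam e * (c e - ∑ t, H e t * y t))
    (x : S → ℝ) (y : T → ℝ) (lam : E → ℝ) :
    L x y lam = ∑ s, U s (x s) + ∑ e, lam e * c e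
      - ∑ t, (∑ e, H e t * lam e) * y t := by
  rw [hL]
  have h1 : ∑ e, lam e * (c e - ∑ t, H e t * y t)
      = ∑ e, lam e * c e - ∑ e, ∑ t, lam e * (H e t * y t) := by
    rw [← Finset.sum_sub_distrib]
    refine Finset.sum_congr rfl fun e _ => ?_
    rw [mul_sub, Finset.mul_sum]
  rw [h1, Finset.sum_comm]
  have h2 : ∀ t, ∑ e, lam e * (H e t * y t) = (∑ e, H e t * lam e) * y t := by
    intro t; rw [Finset.sum_mul]
    exact Finset.sum_congr rfl fun e _ => by ring
  rw [Finset.sum_congr rfl fun t _ => h2 t]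
  ring

section Help
variable {S T E : Type} [Fintype S] [Fintype T] [Fintype E] [DecidableEq S] [DecidableEq T]
variable {σ : T → S} {H : E → T → ℝ} {c : E → ℝ} {m M : S → ℝ} {U : S → ℝ → ℝ}
variable {D : Set ((S → ℝ) × (T → ℝ))}
variable {L : (S → ℝ) → (T → ℝ) → (E → ℝ) → ℝ}
variable {γ : S → (E → ℝ) → ℝ} {xdag : S → ℝ → ℝ} {θ : (E → ℝ) → ℝ}

lemma lag_le
    (hD : D = {p | (∀ t, 0 ≤ p.2 t) ∧
      (∀ s, p.1 s = ∑ t, if σ t = s then p.2 t else 0) ∧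
      (∀ s, p.1 s ∈ Set.Icc (m s) (M s))})
    (hL : ∀ x y lam, L x y lam =
      ∑ s, U s (x s) + ∑ e, lam e * (c e - ∑ t, H e t * y t))
    (hγ : ∀ s lam, IsLeast {w | ∃ t, σ t = s ∧ w = ∑ e, H e t * lam e} (γ s lam))
    (p : (S → ℝ) × (T → ℝ)) (hp : p ∈ D) (lam : E → ℝ) :
    L p.1 p.2 lam ≤ ∑ s, (U s (p.1 s) - γ s lam * p.1 s) + ∑ e, lam e * c e := by
  rw [hD] at hp
  obtain ⟨hy0, hxy, hIcc⟩ := hp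
  rw [lag_decomp H c U L hL]
  have key : ∑ s, γ s lam * p.1 s ≤ ∑ t, (∑ e, H e t * lam e) * p.2 t := by
    have step1 : ∑ t, (γ (σ t) lam) * p.2 t ≤ ∑ t, (∑ e, H e t * lam e) * p.2 t := by
      refine Finset.sum_le_sum fun t _ => ?_
      exact mul_le_mul_of_nonneg_right ((hγ (σ t) lam).2 ⟨t, rfl, rfl⟩) (hy0 t)
    have step2 : ∑ t, (γ (σ t) lam) * p.2 t = ∑ s, γ s lam * p.1 s := by
      rw [fiber_sum σ (fun t => γ (σ t) lam * p.2 t)]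
      refine Finset.sum_congr rfl fun s _ => ?_
      have : ∀ t, (if σ t = s then γ (σ t) lam * p.2 t else 0)
          = γ s lam * (if σ t = s then p.2 t else 0) := by
        intro t; by_cases hs : σ t = s
        · rw [if_pos hs, if_pos hs, hs]
        · rw [if_neg hs, if_neg hs, mul_zero]
      rw [Finset.sum_congr rfl fun t _ => this t, ← Finset.mul_sum, ← hxy s]
    rw [← step2]; exact step1
  have hsplit := Finset.sum_sub_distrib (s := (Finset.univ : Finset S))
    (f := fun s => U s (p.1 s)) (g := fun s => γ s lam * p.1 s)
  rw [hsplit]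
  linarith

lemma pair_mem_D
    (hm : ∀ s, 0 ≤ m s)
    (hD : D = {p | (∀ t, 0 ≤ p.2 t) ∧
      (∀ s, p.1 s = ∑ t, if σ t = s then p.2 t else 0) ∧
      (∀ s, p.1 s ∈ Set.Icc (m s) (M s))})
    (xv : S → ℝ) (hxv : ∀ s, xv s ∈ Set.Icc (m s) (M s))
    (τ : S → T) (hτ : ∀ s, σ (τ s) = s) :
    ((xv, fun t => if τ (σ t) = t then xv (σ t) else 0) : (S → ℝ) × (T → ℝ)) ∈ D := by
  rw [hD]
  refine ⟨fun t => ?_, fun s => ?_, hxv⟩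
  · dsimp only
    by_cases h : τ (σ t) = t
    · rw [if_pos h]; exact le_trans (hm _) (hxv (σ t)).1
    · rw [if_neg h]
  · exact (tau_fiber σ τ hτ xv s).symm

lemma pair_lag
    (hL : ∀ x y lam, L x y lam =
      ∑ s, U s (x s) + ∑ e, lam e * (c e - ∑ t, H e t * y t))
    (lam : E → ℝ) (xv : S → ℝ)
    (τ : S → T) (hτ : ∀ s, σ (τ s) = s)
    (hτcost : ∀ s, (∑ e, H e (τ s) * lam e) = γ s lam) :
    L xv (fun t => if τ (σ t) = t then xv (σ t) else 0) lam
      = ∑ s, (U s (xv s) - γ s lam * xv s) + ∑ e, lam e * c e := by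
  rw [lag_decomp H c U L hL]
  have h : ∑ t, (∑ e, H e t * lam e) * (if τ (σ t) = t then xv (σ t) else 0)
      = ∑ s, γ s lam * xv s := by
    rw [fiber_sum σ (fun t => (∑ e, H e t * lam e) * (if τ (σ t) = t then xv (σ t) else 0))]
    refine Finset.sum_congr rfl fun s _ => ?_
    rw [tau_sum σ τ hτ xv (fun t => ∑ e, H e t * lam e) s, hτcost s]
  rw [h, Finset.sum_sub_distrib]
  ring

variable
    (hm : ∀ s, 0 ≤ m s)
    (hD : D = {p | (∀ t, 0 ≤ p.2 t) ∧
      (∀ s, p.1 s = ∑ t, if σ t = s then p.2 t else 0) ∧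
      (∀ s, p.1 s ∈ Set.Icc (m s) (M s))})
    (hL : ∀ x y lam, L x y lam =
      ∑ s, U s (x s) + ∑ e, lam e * (c e - ∑ t, H e t * y t))
    (hγ : ∀ s lam, IsLeast {w | ∃ t, σ t = s ∧ w = ∑ e, H e t * lam e} (γ s lam))
    (hxdag : ∀ (s : S) (w : ℝ), xdag s w ∈ Set.Icc (m s) (M s) ∧
      (∀ z ∈ Set.Icc (m s) (M s), U s z - w * z ≤ U s (xdag s w) - w * xdag s w) ∧
      (∀ z ∈ Set.Icc (m s) (M s),
        U s z - w * z = U s (xdag s w) - w * xdag s w → z = xdag s w))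
    (hθ : ∀ lam : E → ℝ, IsGreatest {v | ∃ p ∈ D, v = L p.1 p.2 lam} (θ lam))

include hm hD hL hγ hxdag hθ in
lemma theta_formula :
    ∀ lam : E → ℝ, θ lam = ∑ s, (U s (xdag s (γ s lam)) - γ s lam * xdag s (γ s lam))
      + ∑ e, lam e * c e := by
  intro lam
  have hτex : ∀ s : S, ∃ t : T, σ t = s ∧ γ s lam = ∑ e, H e t * lam e :=
    fun s => (hγ s lam).1
  choose τ hτ1 hτ2 using hτex
  have hcost : ∀ s, (∑ e, H e (τ s) * lam e) = γ s lam := fun s => (hτ2 s).symm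
  have hxv : ∀ s, xdag s (γ s lam) ∈ Set.Icc (m s) (M s) := fun s => (hxdag s _).1
  have hmem := pair_mem_D hm hD _ hxv τ hτ1
  have hval := pair_lag (γ := γ) hL lam (fun s => xdag s (γ s lam)) τ hτ1 hcost
  apply le_antisymm
  · obtain ⟨p, hp, hpe⟩ := (hθ lam).1
    rw [hpe]
    refine le_trans (lag_le hD hL hγ p hp lam) ?_
    have h1 : ∀ s, U s (p.1 s) - γ s lam * p.1 s
        ≤ U s (xdag s (γ s lam)) - γ s lam * xdag s (γ s lam) := by
      intro s
      have hpx : p.1 s ∈ Set.Icc (m s) (M s) := by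
        rw [hD] at hp; exact hp.2.2 s
      exact (hxdag s (γ s lam)).2.1 _ hpx
    have h2 := Finset.sum_le_sum (s := Finset.univ) fun s _ => h1 s
    linarith
  · rw [← hval]
    exact (hθ lam).2 ⟨_, hmem, rfl⟩

include hm hD hL hγ hxdag hθ in
lemma recovery :
    ∀ (lam : E → ℝ) (p : (S → ℝ) × (T → ℝ)), p ∈ D →
      θ lam ≤ L p.1 p.2 lam → ∀ s, p.1 s = xdag s (γ s lam) := by
  intro lam p hp hattain s
  have hub := lag_le hD hL hγ p hp lam
  have hform := theta_formula hm hD hL hγ hxdag hθ lam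
  have hle : ∀ s, U s (p.1 s) - γ s lam * p.1 s
      ≤ U s (xdag s (γ s lam)) - γ s lam * xdag s (γ s lam) := by
    intro s
    have hpx : p.1 s ∈ Set.Icc (m s) (M s) := by
      rw [hD] at hp; exact hp.2.2 s
    exact (hxdag s (γ s lam)).2.1 _ hpx
  have hsum : ∑ s, (U s (p.1 s) - γ s lam * p.1 s)
      = ∑ s, (U s (xdag s (γ s lam)) - γ s lam * xdag s (γ s lam)) := by
    have h1 : ∑ s, (U s (xdag s (γ s lam)) - γ s lam * xdag s (γ s lam))
        ≤ ∑ s, (U s (p.1 s) - γ s lam * p.1 s) := by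
      have hLp : L p.1 p.2 lam ≤ θ lam := (hθ lam).2 ⟨p, hp, rfl⟩
      linarith [hub, hform, hattain]
    exact le_antisymm (Finset.sum_le_sum fun s _ => hle s) h1
  have heach := (Finset.sum_eq_sum_iff_of_le (fun s _ => hle s)).1 hsum s (Finset.mem_univ s)
  have hpx : p.1 s ∈ Set.Icc (m s) (M s) := by
    rw [hD] at hp; exact hp.2.2 s
  exact (hxdag s (γ s lam)).2.2 _ hpx heach

end Help
lemma fiber_sum' {S T : Type} [Fintype S] [Fintype T] [DecidableEq S]
    (σ : T → S) (g : T → ℝ) :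
    ∑ t, g t = ∑ s, ∑ t, if σ t = s then g t else 0 := by
  rw [Finset.sum_comm]
  refine Finset.sum_congr rfl fun t _ => ?_
  rw [Finset.sum_ite_eq]; simp

section C2
variable {S T E : Type} [Fintype S] [Fintype T] [Fintype E] [DecidableEq S] [DecidableEq T]
variable {σ : T → S} {H : E → T → ℝ} {c : E → ℝ} {m M : S → ℝ} {U : S → ℝ → ℝ}
variable {D : Set ((S → ℝ) × (T → ℝ))}
variable {L : (S → ℝ) → (T → ℝ) → (E → ℝ) → ℝ} {θ : (E → ℝ) → ℝ}

lemma sum_y_eq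
    (hD : D = {p | (∀ t, 0 ≤ p.2 t) ∧
      (∀ s, p.1 s = ∑ t, if σ t = s then p.2 t else 0) ∧
      (∀ s, p.1 s ∈ Set.Icc (m s) (M s))})
    (p : (S → ℝ) × (T → ℝ)) (hp : p ∈ D) :
    ∑ t, p.2 t = ∑ s, p.1 s := by
  rw [hD] at hp
  rw [fiber_sum' σ p.2]
  exact Finset.sum_congr rfl fun s _ => (hp.2.1 s).symm

lemma Hy_bounds
    (hH : ∀ e t, H e t = 0 ∨ H e t = 1)
    (hD : D = {p | (∀ t, 0 ≤ p.2 t) ∧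
      (∀ s, p.1 s = ∑ t, if σ t = s then p.2 t else 0) ∧
      (∀ s, p.1 s ∈ Set.Icc (m s) (M s))})
    (p : (S → ℝ) × (T → ℝ)) (hp : p ∈ D) (e : E) :
    0 ≤ ∑ t, H e t * p.2 t ∧ ∑ t, H e t * p.2 t ≤ ∑ s, M s := by
  have hsum := sum_y_eq hD p hp
  rw [hD] at hp
  have hH0 : ∀ t, 0 ≤ H e t := fun t => by rcases hH e t with h | h <;> rw [h] <;> norm_num
  have hH1 : ∀ t, H e t ≤ 1 := fun t => by rcases hH e t with h | h <;> rw [h] <;> norm_num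
  constructor
  · exact Finset.sum_nonneg fun t _ => mul_nonneg (hH0 t) (hp.1 t)
  · calc ∑ t, H e t * p.2 t ≤ ∑ t, p.2 t := by
          refine Finset.sum_le_sum fun t _ => ?_
          nlinarith [hp.1 t, hH1 t, hH0 t]
      _ = ∑ s, p.1 s := hsum
      _ ≤ ∑ s, M s := Finset.sum_le_sum fun s _ => (hp.2.2 s).2

lemma theta_sub_le
    (hH : ∀ e t, H e t = 0 ∨ H e t = 1)
    (hc : ∀ e, 0 < c e)
    (hD : D = {p | (∀ t, 0 ≤ p.2 t) ∧
      (∀ s, p.1 s = ∑ t, if σ t = s then p.2 t else 0) ∧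
      (∀ s, p.1 s ∈ Set.Icc (m s) (M s))})
    (hL : ∀ x y lam, L x y lam =
      ∑ s, U s (x s) + ∑ e, lam e * (c e - ∑ t, H e t * y t))
    (hθ : ∀ lam : E → ℝ, IsGreatest {v | ∃ p ∈ D, v = L p.1 p.2 lam} (θ lam))
    (hMnn : 0 ≤ ∑ s, M s)
    (lam mu : E → ℝ) :
    θ lam - θ mu ≤ ∑ e, |lam e - mu e| * (c e + ∑ s, M s) := by
  obtain ⟨p, hp, hpe⟩ := (hθ lam).1
  have h2 : L p.1 p.2 mu ≤ θ mu := (hθ mu).2 ⟨p, hp, rfl⟩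
  have hdiff : L p.1 p.2 lam - L p.1 p.2 mu
      = ∑ e, (lam e - mu e) * (c e - ∑ t, H e t * p.2 t) := by
    rw [hL, hL]
    have h3 : ∑ e, (lam e - mu e) * (c e - ∑ t, H e t * p.2 t)
        = ∑ e, lam e * (c e - ∑ t, H e t * p.2 t)
          - ∑ e, mu e * (c e - ∑ t, H e t * p.2 t) := by
      rw [← Finset.sum_sub_distrib]
      exact Finset.sum_congr rfl fun e _ => by ring
    rw [h3]; ring
  have hbd : ∀ e, (lam e - mu e) * (c e - ∑ t, H e t * p.2 t)
      ≤ |lam e - mu e| * (c e + ∑ s, M s) := by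
    intro e
    obtain ⟨hlo, hhi⟩ := Hy_bounds hH hD p hp e
    have habs : |c e - ∑ t, H e t * p.2 t| ≤ c e + ∑ s, M s := by
      rw [abs_le]; constructor <;> nlinarith [(hc e).le]
    calc (lam e - mu e) * (c e - ∑ t, H e t * p.2 t)
        ≤ |(lam e - mu e) * (c e - ∑ t, H e t * p.2 t)| := le_abs_self _
      _ = |lam e - mu e| * |c e - ∑ t, H e t * p.2 t| := abs_mul _ _
      _ ≤ |lam e - mu e| * (c e + ∑ s, M s) :=
          mul_le_mul_of_nonneg_left habs (abs_nonneg _)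
  have := Finset.sum_le_sum fun e (_ : e ∈ Finset.univ) => hbd e
  linarith [hdiff ▸ this, h2, hpe]

lemma weak_duality
    (hL : ∀ x y lam, L x y lam =
      ∑ s, U s (x s) + ∑ e, lam e * (c e - ∑ t, H e t * y t))
    (hθ : ∀ lam : E → ℝ, IsGreatest {v | ∃ p ∈ D, v = L p.1 p.2 lam} (θ lam))
    {fStar : ℝ} (pstar : (S → ℝ) × (T → ℝ)) (hps : pstar ∈ D)
    (hfeas : ∀ e, ∑ t, H e t * pstar.2 t ≤ c e)
    (hval : ∑ s, U s (pstar.1 s) = fStar)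
    (lam : E → ℝ) (hlam : ∀ e, 0 ≤ lam e) :
    fStar ≤ θ lam := by
  have h1 : L pstar.1 pstar.2 lam ≤ θ lam := (hθ lam).2 ⟨pstar, hps, rfl⟩
  rw [hL, hval] at h1
  have h2 : 0 ≤ ∑ e, lam e * (c e - ∑ t, H e t * pstar.2 t) :=
    Finset.sum_nonneg fun e _ => mul_nonneg (hlam e) (by linarith [hfeas e])
  linarith

lemma coercive
    (hL : ∀ x y lam, L x y lam =
      ∑ s, U s (x s) + ∑ e, lam e * (c e - ∑ t, H e t * y t))
    (hθ : ∀ lam : E → ℝ, IsGreatest {v | ∃ p ∈ D, v = L p.1 p.2 lam} (θ lam))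
    (pbar : (S → ℝ) × (T → ℝ)) (hpb : pbar ∈ D)
    (s0 : ℝ) (hs0 : ∀ e, s0 ≤ c e - ∑ t, H e t * pbar.2 t)
    (lam : E → ℝ) (hlam : ∀ e, 0 ≤ lam e) :
    ∑ s, U s (pbar.1 s) + s0 * ∑ e, lam e ≤ θ lam := by
  have h1 : L pbar.1 pbar.2 lam ≤ θ lam := (hθ lam).2 ⟨pbar, hpb, rfl⟩
  rw [hL] at h1
  have h2 : s0 * ∑ e, lam e ≤ ∑ e, lam e * (c e - ∑ t, H e t * pbar.2 t) := by
    rw [Finset.mul_sum]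
    refine Finset.sum_le_sum fun e _ => ?_
    have := mul_le_mul_of_nonneg_left (hs0 e) (hlam e)
    linarith [this]
  linarith

end C2

lemma affine_nonpos {a k C : ℝ} (h : ∀ t : ℝ, 0 ≤ t → a + t * k < C) : k ≤ 0 := by
  by_contra hk
  push_neg at hk
  have h0 := h 0 le_rfl
  have h0' := h 0 le_rfl
  have ht : (0:ℝ) ≤ (C - a + 1) / k := by
    apply div_nonneg (by linarith) hk.le
  have := h _ ht
  rw [div_mul_cancel₀] at this
  · linarith
  · exact ne_of_gt hk

lemma affine_le {a k C : ℝ} (h : ∀ t : ℝ, 0 < t → a + t * k < C) : a ≤ C := by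
  by_contra hC
  push_neg at hC
  have ht : (0:ℝ) < (a - C) / (|k| + 1) := by
    apply div_pos (by linarith) (by positivity)
  have h1 := h _ ht
  have h2 : -|k| ≤ k := neg_abs_le k
  have h3 : (a - C) / (|k| + 1) * |k| ≤ (a - C) := by
    rw [div_mul_eq_mul_div, div_le_iff₀ (by positivity)]
    nlinarith [abs_nonneg k]
  nlinarith [mul_le_mul_of_nonneg_left h2 ht.le]

section SDual
variable {S T E : Type} [Fintype S] [Fintype T] [Fintype E] [DecidableEq S] [DecidableEq T]
variable {σ : T → S} {H : E → T → ℝ} {c : E → ℝ} {m M : S → ℝ} {U : S → ℝ → ℝ}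
variable {D : Set ((S → ℝ) × (T → ℝ))}
variable {L : (S → ℝ) → (T → ℝ) → (E → ℝ) → ℝ} {θ : (E → ℝ) → ℝ}

lemma strong_duality
    (hD : D = {p | (∀ t, 0 ≤ p.2 t) ∧
      (∀ s, p.1 s = ∑ t, if σ t = s then p.2 t else 0) ∧
      (∀ s, p.1 s ∈ Set.Icc (m s) (M s))})
    (hL : ∀ x y lam, L x y lam =
      ∑ s, U s (x s) + ∑ e, lam e * (c e - ∑ t, H e t * y t))
    (hθ : ∀ lam : E → ℝ, IsGreatest {v | ∃ p ∈ D, v = L p.1 p.2 lam} (θ lam))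
    (hUconc' : ∀ s, ConcaveOn ℝ (Set.Icc (m s) (M s)) (U s))
    {fStar : ℝ}
    (hfStar_ub : ∀ p ∈ D, (∀ e, ∑ t, H e t * p.2 t ≤ c e) →
      ∑ s, U s (p.1 s) ≤ fStar)
    (pbar : (S → ℝ) × (T → ℝ)) (hpb : pbar ∈ D)
    (hsl : ∀ e, ∑ t, H e t * pbar.2 t < c e) :
    ∃ μ0 : E → ℝ, (∀ e, 0 ≤ μ0 e) ∧ θ μ0 ≤ fStar := by
  classical
  set A : Set ((E → ℝ) × ℝ) := {z | ∃ p ∈ D,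
      (∀ e, ∑ t, H e t * p.2 t - c e < z.1 e) ∧ z.2 < ∑ s, U s (p.1 s)} with hA
  -- open
  have hAopen : IsOpen A := by
    have hrw : A = ⋃ (p : (S → ℝ) × (T → ℝ)) (_ : p ∈ D),
        ((⋂ e, (fun z : (E → ℝ) × ℝ => z.1 e) ⁻¹' Set.Ioi (∑ t, H e t * p.2 t - c e)) ∩
          ((fun z : (E → ℝ) × ℝ => z.2) ⁻¹' Set.Iio (∑ s, U s (p.1 s)))) := by
      ext z
      simp only [hA, Set.mem_setOf_eq, Set.mem_iUnion, Set.mem_inter_iff, Set.mem_iInter,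
        Set.mem_preimage, Set.mem_Ioi, Set.mem_Iio]
      constructor
      · rintro ⟨p, hp, h1, h2⟩; exact ⟨p, hp, h1, h2⟩
      · rintro ⟨p, hp, h1, h2⟩; exact ⟨p, hp, h1, h2⟩
    rw [hrw]
    refine isOpen_iUnion fun p => isOpen_iUnion fun _ => ?_
    refine IsOpen.inter (isOpen_iInter_of_finite fun e => ?_) ?_
    · exact isOpen_Ioi.preimage ((continuous_apply e).comp continuous_fst)
    · exact isOpen_Iio.preimage continuous_snd
  -- convex
  have hAconv : Convex ℝ A := by
    rw [convex_iff_forall_pos]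
    rintro z1 ⟨p1, hp1, hs1, hr1⟩ z2 ⟨p2, hp2, hs2, hr2⟩ a b ha hb hab
    refine ⟨a • p1 + b • p2, ?_, ?_, ?_⟩
    · rw [hD]
      rw [hD] at hp1 hp2
      have hy : ∀ t, (a • p1 + b • p2).2 t = a * p1.2 t + b * p2.2 t := fun t => rfl
      have hx : ∀ s, (a • p1 + b • p2).1 s = a * p1.1 s + b * p2.1 s := fun s => rfl
      refine ⟨fun t => ?_, fun s => ?_, fun s => ?_⟩
      · rw [hy t]
        exact add_nonneg (mul_nonneg ha.le (hp1.1 t)) (mul_nonneg hb.le (hp2.1 t))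
      · rw [hx s]
        have hpt : ∀ t, (if σ t = s then (a • p1 + b • p2).2 t else 0)
            = a * (if σ t = s then p1.2 t else 0) + b * (if σ t = s then p2.2 t else 0) := by
          intro t
          by_cases h : σ t = s
          · rw [if_pos h, if_pos h, if_pos h, hy t]
          · rw [if_neg h, if_neg h, if_neg h]; ring
        rw [Finset.sum_congr rfl fun t _ => hpt t, Finset.sum_add_distrib,
          ← Finset.mul_sum, ← Finset.mul_sum, ← hp1.2.1 s, ← hp2.2.1 s]
      · rw [hx s]
        have := (convex_Icc (m s) (M s)) (hp1.2.2 s) (hp2.2.2 s) ha.le hb.le hab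
        simpa using this
    · intro e
      have hHy : ∑ t, H e t * (a • p1 + b • p2).2 t
          = a * (∑ t, H e t * p1.2 t) + b * (∑ t, H e t * p2.2 t) := by
        rw [Finset.mul_sum, Finset.mul_sum, ← Finset.sum_add_distrib]
        refine Finset.sum_congr rfl fun t _ => ?_
        have : (a • p1 + b • p2).2 t = a * p1.2 t + b * p2.2 t := rfl
        rw [this]; ring
      have hz1 : (a • z1 + b • z2).1 e = a * z1.1 e + b * z2.1 e := rfl
      rw [hHy, hz1]
      have g1 := mul_lt_mul_of_pos_left (hs1 e) ha
      have g2 := mul_lt_mul_of_pos_left (hs2 e) hb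
      have hcc : a * c e + b * c e = c e := by rw [← add_mul, hab, one_mul]
      nlinarith [g1, g2, hcc]
    · have hz2 : (a • z1 + b • z2).2 = a * z1.2 + b * z2.2 := rfl
      rw [hz2]
      have hval : a * (∑ s, U s (p1.1 s)) + b * (∑ s, U s (p2.1 s))
          ≤ ∑ s, U s ((a • p1 + b • p2).1 s) := by
        rw [Finset.mul_sum, Finset.mul_sum, ← Finset.sum_add_distrib]
        refine Finset.sum_le_sum fun s _ => ?_
        rw [hD] at hp1 hp2
        have := (hUconc' s).2 (hp1.2.2 s) (hp2.2.2 s) ha.le hb.le hab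
        simpa using this
      have g1 := mul_lt_mul_of_pos_left hr1 ha
      have g2 := mul_lt_mul_of_pos_left hr2 hb
      linarith
  -- the point is not in A
  have hbnotin : ((fun _ => (0:ℝ)), fStar) ∉ A := by
    rintro ⟨p, hp, hslack, hval⟩
    have hfeas : ∀ e, ∑ t, H e t * p.2 t ≤ c e := fun e => by
      have := hslack e; simp only at this; linarith
    have := hfStar_ub p hp hfeas
    simp only at hval
    linarith
  obtain ⟨f, hf⟩ := geometric_hahn_banach_open_point hAconv hAopen hbnotin
  set φ : E → ℝ := fun e => f (Pi.single e 1, 0) with hφdef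
  set β : ℝ := f ((fun _ => (0:ℝ)), 1) with hβdef
  -- decomposition of f
  have hdecomp : ∀ (u : E → ℝ) (r : ℝ), f (u, r) = (∑ e, u e * φ e) + r * β := by
    intro u r
    have hsplit : ((u, r) : (E → ℝ) × ℝ) = (u, 0) + ((fun _ => (0:ℝ)), r) := by
      refine Prod.ext ?_ ?_
      · funext x; simp
      · simp
    have hu : ((u, (0:ℝ)) : (E → ℝ) × ℝ) = ∑ e, ((u e) • ((Pi.single e (1:ℝ) : E → ℝ), (0:ℝ))) := by
      refine Prod.ext ?_ ?_
      · rw [Prod.fst_sum]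
        have : ∀ e, ((u e) • ((Pi.single e (1:ℝ) : E → ℝ), (0:ℝ))).1
            = Pi.single e (u e) := by
          intro e
          funext e'
          by_cases h : e' = e
          · subst h; simp
          · simp [Pi.single_apply, h]
        rw [Finset.sum_congr rfl fun e _ => this e]
        exact (Finset.univ_sum_single u).symm
      · rw [Prod.snd_sum]
        simp
    have hr : ((fun _ => (0:ℝ)), r) = r • (((fun _ => (0:ℝ)) : E → ℝ), (1:ℝ)) := by
      refine Prod.ext ?_ ?_
      · funext x; simp
      · simp
    rw [hsplit, map_add, hu, map_sum, hr, map_smul]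
    simp only [map_smul, smul_eq_mul]
    rfl
  have hC : f ((fun _ => (0:ℝ)), fStar) = fStar * β := by
    rw [hdecomp]; simp
  -- key inequality
  have hkey : ∀ p ∈ D, (∑ e, (∑ t, H e t * p.2 t - c e) * φ e)
      + (∑ s, U s (p.1 s)) * β ≤ fStar * β := by
    intro p hp
    have haff : ∀ t : ℝ, 0 < t →
        ((∑ e, (∑ t', H e t' * p.2 t' - c e) * φ e) + (∑ s, U s (p.1 s)) * β)
          + t * ((∑ e, φ e) - β) < fStar * β := by
      intro t ht
      have hmem : (((fun e => ∑ t', H e t' * p.2 t' - c e + t), (∑ s, U s (p.1 s)) - t)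
          : (E → ℝ) × ℝ) ∈ A := ⟨p, hp, fun e => by simp; linarith, by simp; linarith⟩
      have := hf _ hmem
      rw [hC] at this
      rw [hdecomp] at this
      have hexp : ∑ e, (∑ t', H e t' * p.2 t' - c e + t) * φ e
          = (∑ e, (∑ t', H e t' * p.2 t' - c e) * φ e) + t * (∑ e, φ e) := by
        rw [Finset.mul_sum, ← Finset.sum_add_distrib]
        exact Finset.sum_congr rfl fun e _ => by ring
      rw [hexp] at this
      nlinarith [this]
    exact affine_le haff
  -- φ ≤ 0
  have hφle : ∀ e, φ e ≤ 0 := by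
    intro e
    have haff : ∀ t : ℝ, 0 ≤ t →
        ((∑ s, U s (pbar.1 s)) - 1) * β + t * φ e < fStar * β := by
      intro t ht
      have hmem : (((Pi.single e t : E → ℝ)), (∑ s, U s (pbar.1 s)) - 1) ∈ A := by
        refine ⟨pbar, hpb, fun e' => ?_, by simp⟩
        dsimp only
        by_cases h : e' = e
        · subst h; simp; linarith [hsl e']
        · rw [Pi.single_eq_of_ne h]
          linarith [hsl e']
      have := hf _ hmem
      rw [hC, hdecomp] at this
      have hexp : ∑ e', (Pi.single e t : E → ℝ) e' * φ e' = t * φ e := by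
        rw [Finset.sum_eq_single e]
        · simp
        · intro e' _ h; rw [Pi.single_eq_of_ne h, zero_mul]
        · intro h; exact absurd (Finset.mem_univ e) h
      rw [hexp] at this
      linarith
    exact affine_nonpos haff
  -- β ≥ 0
  have hβnn : 0 ≤ β := by
    have haff : ∀ t : ℝ, 0 ≤ t →
        ((∑ s, U s (pbar.1 s)) - 1) * β + t * (-β) < fStar * β := by
      intro t ht
      have hmem : (((fun _ => (0:ℝ)) : E → ℝ), (∑ s, U s (pbar.1 s)) - 1 - t) ∈ A :=
        ⟨pbar, hpb, fun e => by simp; linarith [hsl e], by simp; linarith⟩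
      have := hf _ hmem
      rw [hC, hdecomp] at this
      simp only [zero_mul, Finset.sum_const_zero, zero_add] at this
      linarith
    have := affine_nonpos haff
    linarith
  -- β > 0
  have hβpos : 0 < β := by
    rcases lt_or_eq_of_le hβnn with h | h
    · exact h
    have hβ0 : β = 0 := h.symm
    exfalso
    have hkp := hkey pbar hpb
    rw [hβ0, mul_zero, mul_zero, add_zero] at hkp
    have hterm : ∀ e, 0 ≤ (∑ t, H e t * pbar.2 t - c e) * φ e := fun e => by
      nlinarith [hsl e, hφle e]
    have hzero : ∀ e ∈ Finset.univ, (∑ t, H e t * pbar.2 t - c e) * φ e = 0 := by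
      have hsum0 : ∑ e, (∑ t, H e t * pbar.2 t - c e) * φ e = 0 :=
        le_antisymm hkp (Finset.sum_nonneg fun e _ => hterm e)
      exact (Finset.sum_eq_zero_iff_of_nonneg fun e _ => hterm e).1 hsum0
    have hφ0 : ∀ e, φ e = 0 := by
      intro e
      have := hzero e (Finset.mem_univ e)
      have hne : (∑ t, H e t * pbar.2 t - c e) ≠ 0 := by linarith [hsl e]
      exact (mul_eq_zero.1 this).resolve_left hne
    have hmem : (((fun _ => (0:ℝ)) : E → ℝ), (∑ s, U s (pbar.1 s)) - 1) ∈ A :=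
      ⟨pbar, hpb, fun e => by simp; linarith [hsl e], by simp⟩
    have h1 := hf _ hmem
    rw [hC, hdecomp] at h1
    simp only [hβ0, mul_zero, add_zero] at h1
    have : ∑ e, (fun _ => (0:ℝ)) e * φ e = 0 := by simp
    rw [this] at h1
    exact lt_irrefl 0 h1
  -- conclusion
  refine ⟨fun e => -φ e / β, fun e => div_nonneg (by linarith [hφle e]) hβpos.le, ?_⟩
  obtain ⟨p0, hp0, hp0e⟩ := (hθ (fun e => -φ e / β)).1
  rw [hp0e, hL]
  have hkp := hkey p0 hp0
  have hrw : ∑ e, (-φ e / β) * (c e - ∑ t, H e t * p0.2 t)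
      = (∑ e, (∑ t, H e t * p0.2 t - c e) * φ e) / β := by
    rw [Finset.sum_div]
    refine Finset.sum_congr rfl fun e _ => ?_
    field_simp
    ring
  rw [hrw]
  have hdivle : (∑ e, (∑ t, H e t * p0.2 t - c e) * φ e) / β
      ≤ fStar - ∑ s, U s (p0.1 s) := by
    rw [div_le_iff₀ hβpos]
    nlinarith [hkp]
  linarith
end SDual

lemma proj_step {aa b g δ : ℝ} (hb : 0 ≤ b) :
    (max 0 (aa - δ*g) - b)^2 ≤ (aa - b)^2 - 2*δ*g*(aa-b) + δ^2*g^2 := by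
  have h1 : (max 0 (aa - δ*g) - b)^2 ≤ ((aa - δ*g) - b)^2 := by
    rcases le_or_gt 0 (aa - δ*g) with h | h
    · rw [max_eq_right h]
    · rw [max_eq_left h.le]; nlinarith
  nlinarith [h1]

lemma xdag_cont {m M : ℝ} (hm : 0 ≤ m) (hmM : m < M) {Us : ℝ → ℝ}
    (hUcont : ContinuousOn Us (Set.Icc m M))
    {xd : ℝ → ℝ}
    (hxd : ∀ w : ℝ, xd w ∈ Set.Icc m M ∧
      (∀ z ∈ Set.Icc m M, Us z - w * z ≤ Us (xd w) - w * xd w) ∧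
      (∀ z ∈ Set.Icc m M, Us z - w * z = Us (xd w) - w * xd w → z = xd w))
    (wstar : ℝ) (ε : ℝ) (hε : 0 < ε) :
    ∃ δw > 0, ∀ w : ℝ, |w - wstar| < δw → |xd w - xd wstar| < ε := by
  have hM0 : 0 < M := lt_of_le_of_lt hm hmM
  set x0 := xd wstar with hx0
  have hbound : ∀ z ∈ Set.Icc m M, |z| ≤ M := by
    intro z hz
    rw [abs_le]; constructor
    · linarith [hz.1, hm]
    · exact hz.2
  set K := Set.Icc m M ∩ {z : ℝ | ε ≤ |z - x0|} with hK
  have hKclosed : IsClosed {z : ℝ | ε ≤ |z - x0|} :=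
    isClosed_le continuous_const ((continuous_id.sub continuous_const).abs)
  have hKcomp : IsCompact K := isCompact_Icc.inter_right hKclosed
  rcases K.eq_empty_or_nonempty with hKe | hKne
  · refine ⟨1, one_pos, fun w hw => ?_⟩
    by_contra hcon
    push_neg at hcon
    have : xd w ∈ K := ⟨(hxd w).1, hcon⟩
    rw [hKe] at this
    exact this
  · have hcontf : ContinuousOn (fun z => Us z - wstar * z) K :=
      (hUcont.mono Set.inter_subset_left).sub
        (Continuous.continuousOn (continuous_const.mul continuous_id))
    obtain ⟨z1, hz1K, hz1max⟩ := hKcomp.exists_isMaxOn hKne hcontf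
    have hz1Icc : z1 ∈ Set.Icc m M := hz1K.1
    have hz1ne : z1 ≠ x0 := by
      intro h
      have := hz1K.2
      rw [h] at this
      simp at this
      linarith
    have hlt : Us z1 - wstar * z1 < Us x0 - wstar * x0 := by
      rcases lt_or_eq_of_le ((hxd wstar).2.1 z1 hz1Icc) with h | h
      · exact h
      · exact absurd ((hxd wstar).2.2 z1 hz1Icc h) hz1ne
    set gap := (Us x0 - wstar * x0) - (Us z1 - wstar * z1) with hgap
    have hgappos : 0 < gap := by linarith
    refine ⟨gap / (2*M + 2), by positivity, fun w hw => ?_⟩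
    by_contra hcon
    push_neg at hcon
    set xw := xd w with hxw
    have hxwK : xw ∈ K := ⟨(hxd w).1, hcon⟩
    have h1 : Us xw - wstar * xw ≤ Us z1 - wstar * z1 := hz1max hxwK
    have h2 : Us x0 - w * x0 ≤ Us xw - w * xw := (hxd w).2.1 x0 (hxd wstar).1
    have hax0 : |x0| ≤ M := hbound x0 (hxd wstar).1
    have haxw : |xw| ≤ M := hbound xw (hxd w).1
    have e1 : (w - wstar) * x0 ≤ |w - wstar| * M := by
      calc (w - wstar) * x0 ≤ |(w - wstar) * x0| := le_abs_self _
        _ = |w - wstar| * |x0| := abs_mul _ _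
        _ ≤ |w - wstar| * M := mul_le_mul_of_nonneg_left hax0 (abs_nonneg _)
    have e2 : -((w - wstar) * xw) ≤ |w - wstar| * M := by
      calc -((w - wstar) * xw) ≤ |(w - wstar) * xw| := neg_le_abs _
        _ = |w - wstar| * |xw| := abs_mul _ _
        _ ≤ |w - wstar| * M := mul_le_mul_of_nonneg_left haxw (abs_nonneg _)
    have hsmall : |w - wstar| * (2*M) < gap := by
      have : |w - wstar| * (2*M+2) < gap / (2*M+2) * (2*M+2) :=
        mul_lt_mul_of_pos_right hw (by positivity)
      rw [div_mul_cancel₀] at this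
      · nlinarith [abs_nonneg (w - wstar)]
      · positivity
    nlinarith [h1, h2, e1, e2, hsmall]

lemma gamma_side {S T E : Type} [Fintype S] [Fintype T] [Fintype E]
    {σ : T → S} {H : E → T → ℝ} {γ : S → (E → ℝ) → ℝ}
    (hH : ∀ e t, H e t = 0 ∨ H e t = 1)
    (hγ : ∀ s lam, IsLeast {w | ∃ t, σ t = s ∧ w = ∑ e, H e t * lam e} (γ s lam))
    (s : S) (lam mu : E → ℝ) :
    γ s lam - γ s mu ≤ ∑ e, |lam e - mu e| := by
  obtain ⟨t0, ht0σ, ht0eq⟩ := (hγ s mu).1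
  have h1 : γ s lam ≤ ∑ e, H e t0 * lam e := (hγ s lam).2 ⟨t0, ht0σ, rfl⟩
  have h2 : ∑ e, H e t0 * lam e - ∑ e, H e t0 * mu e ≤ ∑ e, |lam e - mu e| := by
    rw [← Finset.sum_sub_distrib]
    refine Finset.sum_le_sum fun e _ => ?_
    have : H e t0 * lam e - H e t0 * mu e = H e t0 * (lam e - mu e) := by ring
    rw [this]
    rcases hH e t0 with h | h
    · rw [h, zero_mul]; exact abs_nonneg _
    · rw [h, one_mul]; exact le_abs_self _
  rw [ht0eq]
  linarith

lemma gamma_lip {S T E : Type} [Fintype S] [Fintype T] [Fintype E]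
    {σ : T → S} {H : E → T → ℝ} {γ : S → (E → ℝ) → ℝ}
    (hH : ∀ e t, H e t = 0 ∨ H e t = 1)
    (hγ : ∀ s lam, IsLeast {w | ∃ t, σ t = s ∧ w = ∑ e, H e t * lam e} (γ s lam))
    (s : S) (lam mu : E → ℝ) :
    |γ s lam - γ s mu| ≤ ∑ e, |lam e - mu e| := by
  rw [abs_sub_le_iff]
  constructor
  · exact gamma_side hH hγ s lam mu
  · have := gamma_side hH hγ s mu lam
    have hs : ∑ e, |mu e - lam e| = ∑ e, |lam e - mu e| :=
      Finset.sum_congr rfl fun e _ => abs_sub_comm _ _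
    linarith [this, hs.le]

lemma eudist_eq {E : Type} [Fintype E] (a b : EuclideanSpace ℝ E) :
    dist a b = Real.sqrt (∑ e, (a e - b e)^2) := by
  rw [EuclideanSpace.dist_eq]
  congr 1
  exact Finset.sum_congr rfl fun e _ => by rw [Real.dist_eq, sq_abs]

lemma eunorm_eq {E : Type} [Fintype E] (a : EuclideanSpace ℝ E) :
    ‖a‖ = Real.sqrt (∑ e, (a e)^2) := by
  rw [EuclideanSpace.norm_eq]
  congr 1
  exact Finset.sum_congr rfl fun e _ => by rw [Real.norm_eq_abs, sq_abs]

lemma coord_le_eudist {E : Type} [Fintype E] (a b : EuclideanSpace ℝ E) (e : E) :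
    |a e - b e| ≤ dist a b := by
  rw [eudist_eq]
  have h1 : |a e - b e| = Real.sqrt ((a e - b e)^2) := (Real.sqrt_sq_eq_abs _).symm
  rw [h1]
  apply Real.sqrt_le_sqrt
  exact Finset.single_le_sum (f := fun e' => (a e' - b e')^2) (fun e' _ => sq_nonneg _)
    (Finset.mem_univ e)

/-- convergence of the subgradient algorithm: under A1 and A2, for every
ε > 0 there is a δ0 > 0 such that under step-size rule I (with steps < δ0) or rule II,
the iterates eventually satisfy d(λ(k), Λ*) < ε and ‖x(k) − x*‖ < ε. -/
theorem subgradient_convergence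
    {S T E : Type} [Fintype S] [Fintype T] [Fintype E]
    [Nonempty S] [Nonempty T] [Nonempty E] [DecidableEq S] [DecidableEq T]
    (σ : T → S) (hσ : Function.Surjective σ)
    (H : E → T → ℝ) (hH : ∀ e t, H e t = 0 ∨ H e t = 1)
    (c : E → ℝ) (hc : ∀ e, 0 < c e)
    (m M : S → ℝ) (hm : ∀ s, 0 ≤ m s) (hmM : ∀ s, m s < M s)
    (U : S → ℝ → ℝ)
    -- Assumption A1
    (hUmono : ∀ s, MonotoneOn (U s) (Set.Icc (m s) (M s)))
    (hUconc : ∀ s, StrictConcaveOn ℝ (Set.Icc (m s) (M s)) (U s))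
    (hUdiff : ∀ s, ContDiffOn ℝ 1 (U s) (Set.Icc (m s) (M s)))
    -- the domain D
    (D : Set ((S → ℝ) × (T → ℝ)))
    (hD : D = {p | (∀ t, 0 ≤ p.2 t) ∧
      (∀ s, p.1 s = ∑ t, if σ t = s then p.2 t else 0) ∧
      (∀ s, p.1 s ∈ Set.Icc (m s) (M s))})
    -- the Lagrangian
    (L : (S → ℝ) → (T → ℝ) → (E → ℝ) → ℝ)
    (hL : ∀ x y lam, L x y lam =
      ∑ s, U s (x s) + ∑ e, lam e * (c e - ∑ t, H e t * y t))
    -- the optimal value of the master problem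
    (fStar : ℝ)
    (hfStar : IsGreatest {v | ∃ p ∈ D, (∀ e, ∑ t, H e t * p.2 t ≤ c e) ∧
      v = ∑ s, U s (p.1 s)} fStar)
    -- the dual function
    (θ : (E → ℝ) → ℝ)
    (hθ : ∀ lam : E → ℝ, IsGreatest {v | ∃ p ∈ D, v = L p.1 p.2 lam} (θ lam))
    -- Assumption A2 (Slater)
    (hslater : ∃ p ∈ D, ∀ e, ∑ t, H e t * p.2 t < c e)
    -- the minimum tree cost γ(s, λ)
    (γ : S → (E → ℝ) → ℝ)
    (hγ : ∀ s lam, IsLeast {w | ∃ t, σ t = s ∧ w = ∑ e, H e t * lam e} (γ s lam))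
    -- x_s†(w) : the unique maximizer of x ↦ U_s(x) - w·x over [m_s, M_s]
    (xdag : S → ℝ → ℝ)
    (hxdag : ∀ (s : S) (w : ℝ), xdag s w ∈ Set.Icc (m s) (M s) ∧
      (∀ z ∈ Set.Icc (m s) (M s), U s z - w * z ≤ U s (xdag s w) - w * xdag s w) ∧
      (∀ z ∈ Set.Icc (m s) (M s),
        U s z - w * z = U s (xdag s w) - w * xdag s w → z = xdag s w))
    -- x* is the unique optimal session-rate vector of the MP
    (xstar : EuclideanSpace ℝ S)
    (hxstar_opt : ∃ ystar : T → ℝ, ((fun s => xstar s), ystar) ∈ D ∧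
      (∀ e, ∑ t, H e t * ystar t ≤ c e) ∧ ∑ s, U s (xstar s) = fStar)
    (hxstar_uniq : ∀ p ∈ D, (∀ e, ∑ t, H e t * p.2 t ≤ c e) →
      ∑ s, U s (p.1 s) = fStar → ∀ s, p.1 s = xstar s) :
    ∀ ε : ℝ, 0 < ε → ∃ δ0 : ℝ, 0 < δ0 ∧
      ∀ (lam : ℕ → EuclideanSpace ℝ E) (x : ℕ → EuclideanSpace ℝ S)
        (y : ℕ → T → ℝ) (δseq : ℕ → ℝ),
        (∀ k, 0 < δseq k) →
        -- the dual update
        (∀ k e, lam (k+1) e =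
          max 0 (lam k e - δseq k * (c e - ∑ t, H e t * y k t))) →
        -- the primal updates
        (∀ k s, x k s = xdag s (γ s (fun e => lam k e))) →
        (∀ k, ∃ τ : S → T,
          (∀ s, σ (τ s) = s ∧
            ∑ e, H e (τ s) * lam k e = γ s (fun e => lam k e)) ∧
          (∀ t, y k t = if τ (σ t) = t then x k (σ t) else 0)) →
        -- step size rule I with δ(k) < δ0 for all k, or step size rule II
        (((∃ K : ℕ, ∃ δ : ℝ, 0 < δ ∧ ∀ k, K ≤ k → δseq k = δ) ∧
            (∀ k, δseq k < δ0)) ∨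
          ((∃ K : ℕ, ∀ k, K ≤ k → δseq (k+1) ≤ δseq k) ∧
            Filter.Tendsto δseq Filter.atTop (nhds 0) ∧
            Filter.Tendsto (fun k => ∑ u ∈ Finset.range (k+1), δseq u)
              Filter.atTop Filter.atTop)) →
        -- any initial λ(0) ≥ 0
        (∀ e, 0 ≤ lam 0 e) →
        ∃ K0 : ℕ, ∀ k, K0 ≤ k →
          Metric.infDist (lam k)
            {l : EuclideanSpace ℝ E | (∀ e, 0 ≤ l e) ∧
              ∀ μ : E → ℝ, (∀ e, 0 ≤ μ e) → θ (fun e => l e) ≤ θ μ} < ε ∧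
          ‖x k - xstar‖ < ε := by
  classical
  intro ε hε
  obtain ⟨pbar, hpb, hsl⟩ := hslater
  obtain ⟨ystar, hpsD, hpsfeas, hpsval⟩ := hxstar_opt
  set pstar : (S → ℝ) × (T → ℝ) := ((fun s => xstar s), ystar) with hpstardef
  have hweak : ∀ l : E → ℝ, (∀ e, 0 ≤ l e) → fStar ≤ θ l := fun l hl =>
    weak_duality hL hθ pstar hpsD hpsfeas hpsval l hl
  have hconc' : ∀ s, ConcaveOn ℝ (Set.Icc (m s) (M s)) (U s) := fun s => (hUconc s).concaveOn
  have hfub : ∀ p ∈ D, (∀ e, ∑ t, H e t * p.2 t ≤ c e) → ∑ s, U s (p.1 s) ≤ fStar :=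
    fun p hp hf => hfStar.2 ⟨p, hp, hf, rfl⟩
  obtain ⟨μ0, hμ0nn, hμ0le⟩ := strong_duality hD hL hθ hconc' hfub pbar hpb hsl
  set Λs : Set (EuclideanSpace ℝ E) := {l : EuclideanSpace ℝ E | (∀ e, 0 ≤ l e) ∧
      ∀ μ : E → ℝ, (∀ e, 0 ≤ μ e) → θ (fun e => l e) ≤ θ μ} with hΛsdef
  have hΛchar : ∀ l : EuclideanSpace ℝ E,
      l ∈ Λs ↔ ((∀ e, 0 ≤ l e) ∧ θ (fun e => l e) ≤ fStar) := by
    intro l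
    constructor
    · rintro ⟨h1, h2⟩
      exact ⟨h1, le_trans (h2 μ0 hμ0nn) hμ0le⟩
    · rintro ⟨h1, h2⟩
      exact ⟨h1, fun μ hμ => le_trans h2 (hweak μ hμ)⟩
  set μ0E : EuclideanSpace ℝ E := (WithLp.equiv 2 (E → ℝ)).symm μ0 with hμ0Edef
  have hμ0mem : μ0E ∈ Λs := (hΛchar μ0E).2 ⟨fun e => hμ0nn e, hμ0le⟩
  have hΛne : Λs.Nonempty := ⟨μ0E, hμ0mem⟩
  have hΛfS : ∀ l ∈ Λs, θ (fun e => l e) = fStar := fun l hl =>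
    le_antisymm ((hΛchar l).1 hl).2 (hweak _ ((hΛchar l).1 hl).1)
  -- constants
  set B : ℝ := ∑ s, M s with hBdef
  have hB0 : 0 ≤ B := Finset.sum_nonneg fun s _ => le_of_lt (lt_of_le_of_lt (hm s) (hmM s))
  set G2 : ℝ := ∑ e, (c e + B)^2 with hG2def
  have hG2nn : 0 ≤ G2 := Finset.sum_nonneg fun e _ => sq_nonneg _
  set G : ℝ := Real.sqrt G2 with hGdef
  have hGnn : 0 ≤ G := Real.sqrt_nonneg _
  have hG2G : G^2 = G2 := Real.sq_sqrt hG2nn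
  set s0 : ℝ := (Finset.univ : Finset E).inf' Finset.univ_nonempty
    (fun e => c e - ∑ t, H e t * pbar.2 t) with hs0def
  have hs0pos : 0 < s0 := by
    rw [hs0def, Finset.lt_inf'_iff]
    exact fun e _ => sub_pos.2 (hsl e)
  have hs0le : ∀ e, s0 ≤ c e - ∑ t, H e t * pbar.2 t :=
    fun e => Finset.inf'_le _ (Finset.mem_univ e)
  set fbar : ℝ := ∑ s, U s (pbar.1 s) with hfbardef
  have hcoerce : ∀ l : E → ℝ, (∀ e, 0 ≤ l e) → θ l ≤ fStar + 1 →
      ∀ e, l e ≤ (fStar + 1 - fbar) / s0 := by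
    intro l hl hθl e
    have h1 := coercive hL hθ pbar hpb s0 hs0le l hl
    have h2 : l e ≤ ∑ e', l e' := Finset.single_le_sum (fun e' _ => hl e') (Finset.mem_univ e)
    have h3 : ∑ e', l e' ≤ (fStar + 1 - fbar) / s0 := by
      rw [le_div_iff₀ hs0pos]
      nlinarith [h1]
    linarith
  set R0 : ℝ := max ((fStar + 1 - fbar) / s0) 0 with hR0def
  have hR0nn : 0 ≤ R0 := le_max_right _ _
  set RS : ℝ := Real.sqrt (∑ _e : E, R0^2) with hRSdef
  have hnormbd : ∀ l : EuclideanSpace ℝ E, (∀ e, 0 ≤ l e) →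
      θ (fun e => l e) ≤ fStar + 1 → ‖l‖ ≤ RS := by
    intro l hl hθl
    rw [eunorm_eq]
    apply Real.sqrt_le_sqrt
    refine Finset.sum_le_sum fun e _ => ?_
    have h1 : l e ≤ (fStar + 1 - fbar) / s0 := hcoerce (fun e => l e) hl hθl e
    have h2 : l e ≤ R0 := le_trans h1 (le_max_left _ _)
    nlinarith [hl e]
  -- continuity of coordinate evaluations
  have hevalcont : ∀ e : E, Continuous (fun l : EuclideanSpace ℝ E => l e) := by
    intro e
    have h1 : Continuous (fun l : E → ℝ => l e) := continuous_apply e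
    exact h1.comp (PiLp.continuous_ofLp 2 (fun _ : E => ℝ))
  -- continuity of the dual function on Euclidean space
  have hθE : Continuous (fun l : EuclideanSpace ℝ E => θ (fun e => l e)) := by
    set KC : ℝ := ∑ e, (c e + B) with hKCdef
    have hKC0 : 0 ≤ KC := Finset.sum_nonneg fun e _ => by linarith [(hc e).le, hB0]
    refine (LipschitzWith.of_dist_le_mul (K := Real.toNNReal KC) ?_).continuous
    intro l l'
    rw [Real.dist_eq, Real.coe_toNNReal KC hKC0]
    have hside : ∀ a b : EuclideanSpace ℝ E,
        θ (fun e => a e) - θ (fun e => b e) ≤ KC * dist a b := by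
      intro a b
      have h1 := theta_sub_le hH hc hD hL hθ hB0 (fun e => a e) (fun e => b e)
      have h2 : ∑ e, |a e - b e| * (c e + B) ≤ ∑ e, dist a b * (c e + B) := by
        refine Finset.sum_le_sum fun e _ => ?_
        exact mul_le_mul_of_nonneg_right (coord_le_eudist a b e)
          (by linarith [(hc e).le, hB0])
      have h3 : ∑ e, dist a b * (c e + B) = KC * dist a b := by
        rw [← Finset.mul_sum, mul_comm]
      linarith
    rw [abs_sub_le_iff]
    exact ⟨hside l l', by have := hside l' l; rwa [dist_comm] at this⟩
  -- Λs is compact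
  have hposclosed : IsClosed {l : EuclideanSpace ℝ E | ∀ e, 0 ≤ l e} := by
    have h1 : {l : EuclideanSpace ℝ E | ∀ e, 0 ≤ l e}
        = ⋂ e, {l : EuclideanSpace ℝ E | 0 ≤ l e} := by
      ext l; simp [Set.mem_iInter]
    rw [h1]
    exact isClosed_iInter fun e => isClosed_le continuous_const (hevalcont e)
  have hΛclosed : IsClosed Λs := by
    have h1 : Λs = {l : EuclideanSpace ℝ E | ∀ e, 0 ≤ l e}
        ∩ {l : EuclideanSpace ℝ E | θ (fun e => l e) ≤ fStar} := by
      ext l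
      rw [hΛchar l]
      simp [Set.mem_inter_iff]
    rw [h1]
    exact hposclosed.inter (isClosed_le hθE continuous_const)
  have hΛbdd : Bornology.IsBounded Λs := by
    refine (Metric.isBounded_closedBall (x := (0 : EuclideanSpace ℝ E)) (r := RS)).subset ?_
    intro l hl
    rw [Metric.mem_closedBall, dist_zero_right]
    exact hnormbd l ((hΛchar l).1 hl).1 (by linarith [((hΛchar l).1 hl).2])
  have hΛcomp : IsCompact Λs := Metric.isCompact_of_isClosed_isBounded hΛclosed hΛbdd
  -- primal recovery on Λs
  have hrec : ∀ l ∈ Λs, ∀ s : S, xdag s (γ s (fun e => l e)) = xstar s := by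
    intro l hl s
    have hl1 := (hΛchar l).1 hl
    have hθl : θ (fun e => l e) = fStar := hΛfS l hl
    have hLge : θ (fun e => l e) ≤ L pstar.1 pstar.2 (fun e => l e) := by
      rw [hθl, hL]
      have h1 : 0 ≤ ∑ e, l e * (c e - ∑ t, H e t * pstar.2 t) :=
        Finset.sum_nonneg fun e _ => mul_nonneg (hl1.1 e) (by linarith [hpsfeas e])
      have h2 : ∑ s', U s' (pstar.1 s') = fStar := hpsval
      linarith
    exact (recovery hm hD hL hγ hxdag hθ (fun e => l e) pstar hpsD hLge s).symm
  -- the reconstruction map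
  set ΦE : EuclideanSpace ℝ E → EuclideanSpace ℝ S :=
    fun l => (WithLp.equiv 2 (S → ℝ)).symm (fun s => xdag s (γ s (fun e => l e))) with hΦEdef
  -- covering lemma: near Λs the recovered primal is near xstar
  have hcover : ∃ r : ℝ, 0 < r ∧ ∀ l : EuclideanSpace ℝ E,
      Metric.infDist l Λs < r → ‖ΦE l - xstar‖ < ε := by
    set sqS : ℝ := Real.sqrt (Fintype.card S : ℝ) with hsqSdef
    have hsqSnn : 0 ≤ sqS := Real.sqrt_nonneg _
    set ε' : ℝ := ε / (sqS + 1) with hε'def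
    have hε'pos : 0 < ε' := div_pos hε (by linarith)
    -- local continuity around each dual optimum
    have hloc : ∀ lstar ∈ Λs, ∃ ρ : ℝ, 0 < ρ ∧ ∀ l : EuclideanSpace ℝ E,
        dist l lstar < 2*ρ → ‖ΦE l - xstar‖ < ε := by
      intro lstar hlstar
      have hper : ∀ s : S, ∃ δw : ℝ, 0 < δw ∧ ∀ w : ℝ,
          |w - γ s (fun e => lstar e)| < δw →
          |xdag s w - xdag s (γ s (fun e => lstar e))| < ε' := by
        intro s
        obtain ⟨δw, hδw1, hδw2⟩ := xdag_cont (hm s) (hmM s) ((hUdiff s).continuousOn)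
          (fun w => hxdag s w) (γ s (fun e => lstar e)) ε' hε'pos
        exact ⟨δw, hδw1, hδw2⟩
      choose δw hδwpos hδwprop using hper
      set ρ : ℝ := ((Finset.univ : Finset S).inf' Finset.univ_nonempty δw)
        / (2 * ((Fintype.card E : ℝ) + 1)) with hρdef
      have hinfpos : 0 < (Finset.univ : Finset S).inf' Finset.univ_nonempty δw := by
        rw [Finset.lt_inf'_iff]
        exact fun s _ => hδwpos s
      have hρpos : 0 < ρ := by
        apply div_pos hinfpos
        positivity
      refine ⟨ρ, hρpos, fun l hld => ?_⟩
      have hcoord : ∀ s : S, |ΦE l s - xstar s| < ε' := by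
        intro s
        have hγd : |γ s (fun e => l e) - γ s (fun e => lstar e)| ≤ ∑ e, |l e - lstar e| :=
          gamma_lip hH hγ s _ _
        have hsum : ∑ e, |l e - lstar e| ≤ (Fintype.card E : ℝ) * dist l lstar := by
          calc ∑ e, |l e - lstar e| ≤ ∑ _e : E, dist l lstar :=
                Finset.sum_le_sum fun e _ => coord_le_eudist l lstar e
            _ = (Fintype.card E : ℝ) * dist l lstar := by
                rw [Finset.sum_const, Finset.card_univ, nsmul_eq_mul]
        have hlt : |γ s (fun e => l e) - γ s (fun e => lstar e)| < δw s := by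
          have h0 : 0 ≤ dist l lstar := dist_nonneg
          have h1 : (Fintype.card E : ℝ) * dist l lstar
              ≤ ((Fintype.card E : ℝ) + 1) * dist l lstar := by nlinarith
          have h2 : ((Fintype.card E : ℝ) + 1) * dist l lstar
              < ((Fintype.card E : ℝ) + 1) * (2*ρ) :=
            mul_lt_mul_of_pos_left hld (by positivity)
          have h3 : ((Fintype.card E : ℝ) + 1) * (2*ρ)
              = (Finset.univ : Finset S).inf' Finset.univ_nonempty δw := by
            rw [hρdef]
            field_simp
          have h4 : (Finset.univ : Finset S).inf' Finset.univ_nonempty δw ≤ δw s :=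
            Finset.inf'_le _ (Finset.mem_univ s)
          linarith
        have h5 := hδwprop s _ hlt
        rw [hrec lstar hlstar s] at h5
        exact h5
      have hfinal : ‖ΦE l - xstar‖ = Real.sqrt (∑ s, (ΦE l s - xstar s)^2) := by
        rw [eunorm_eq]
        congr 1
      rw [hfinal]
      have h6 : ∑ s, (ΦE l s - xstar s)^2 ≤ ∑ _s : S, ε'^2 := by
        refine Finset.sum_le_sum fun s _ => ?_
        have := hcoord s
        nlinarith [abs_nonneg (ΦE l s - xstar s), le_abs_self (ΦE l s - xstar s),
          neg_abs_le (ΦE l s - xstar s)]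
      have h7 : Real.sqrt (∑ s, (ΦE l s - xstar s)^2) ≤ Real.sqrt (∑ _s : S, ε'^2) :=
        Real.sqrt_le_sqrt h6
      have h8 : Real.sqrt (∑ _s : S, ε'^2) = sqS * ε' := by
        rw [Finset.sum_const, Finset.card_univ, nsmul_eq_mul, Real.sqrt_mul (by positivity),
          Real.sqrt_sq hε'pos.le]
      have h9 : sqS * ε' < ε := by
        rw [hε'def, ← mul_div_assoc, div_lt_iff₀ (by linarith : (0:ℝ) < sqS + 1)]
        nlinarith
      linarith
    -- finite subcover
    have hlocsub := fun (i : Λs) => hloc i.1 i.2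
    choose ρfun hρpos hρprop using hlocsub
    have hsub : Λs ⊆ ⋃ i : Λs, Metric.ball (i : EuclideanSpace ℝ E) (ρfun i) := by
      intro l hl
      exact Set.mem_iUnion.2 ⟨⟨l, hl⟩, Metric.mem_ball_self (hρpos ⟨l, hl⟩)⟩
    obtain ⟨t, ht⟩ := hΛcomp.elim_finite_subcover
      (fun i : Λs => Metric.ball (i : EuclideanSpace ℝ E) (ρfun i))
      (fun i => Metric.isOpen_ball) hsub
    have htne : t.Nonempty := by
      obtain ⟨l0, hl0⟩ := hΛne
      have := ht hl0
      rw [Set.mem_iUnion₂] at this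
      obtain ⟨i, hit, _⟩ := this
      exact ⟨i, hit⟩
    set r : ℝ := t.inf' htne ρfun with hrdef
    have hrpos : 0 < r := by
      rw [hrdef, Finset.lt_inf'_iff]
      exact fun i _ => hρpos i
    refine ⟨r, hrpos, fun l hl => ?_⟩
    obtain ⟨lstar, hlstarΛ, hdist⟩ := (Metric.infDist_lt_iff hΛne).1 hl
    have hmem := ht hlstarΛ
    rw [Set.mem_iUnion₂] at hmem
    obtain ⟨i, hit, hballi⟩ := hmem
    rw [Metric.mem_ball] at hballi
    have hri : r ≤ ρfun i := Finset.inf'_le _ hit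
    have h2ρ : dist l (i : EuclideanSpace ℝ E) < 2 * ρfun i := by
      have := dist_triangle l lstar (i : EuclideanSpace ℝ E)
      linarith
    exact hρprop i l h2ρ
  obtain ⟨r, hrpos, hrprop⟩ := hcover
  set ε2 : ℝ := min r ε with hε2def
  have hε2pos : 0 < ε2 := lt_min hrpos hε
  -- gap lemma via compactness
  have hgapex : ∃ η : ℝ, 0 < η ∧ η ≤ 1 ∧ ∀ l : EuclideanSpace ℝ E, (∀ e, 0 ≤ l e) →
      θ (fun e => l e) ≤ fStar + η → Metric.infDist l Λs < ε2/2 := by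
    set Kset : Set (EuclideanSpace ℝ E) := {l : EuclideanSpace ℝ E | (∀ e, 0 ≤ l e) ∧
      θ (fun e => l e) ≤ fStar + 1 ∧ ε2/2 ≤ Metric.infDist l Λs} with hKsetdef
    have hKclosed : IsClosed Kset := by
      have h2 : IsClosed {l : EuclideanSpace ℝ E | θ (fun e => l e) ≤ fStar + 1} :=
        isClosed_le hθE continuous_const
      have h3 : IsClosed {l : EuclideanSpace ℝ E | ε2/2 ≤ Metric.infDist l Λs} :=
        isClosed_le continuous_const (Metric.continuous_infDist_pt Λs)
      have h4 : Kset = {l : EuclideanSpace ℝ E | ∀ e, 0 ≤ l e}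
          ∩ ({l : EuclideanSpace ℝ E | θ (fun e => l e) ≤ fStar + 1}
            ∩ {l : EuclideanSpace ℝ E | ε2/2 ≤ Metric.infDist l Λs}) := by
        ext l
        simp only [hKsetdef, Set.mem_setOf_eq, Set.mem_inter_iff]
      rw [h4]
      exact hposclosed.inter (h2.inter h3)
    have hKbdd : Bornology.IsBounded Kset := by
      refine (Metric.isBounded_closedBall (x := (0 : EuclideanSpace ℝ E)) (r := RS)).subset ?_
      intro l hl
      rw [Metric.mem_closedBall, dist_zero_right]
      exact hnormbd l hl.1 hl.2.1
    have hKcomp : IsCompact Kset := Metric.isCompact_of_isClosed_isBounded hKclosed hKbdd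
    rcases Kset.eq_empty_or_nonempty with hKe | hKne
    · refine ⟨1, one_pos, le_rfl, fun l hlnn hθl => ?_⟩
      by_contra hcon
      push_neg at hcon
      have : l ∈ Kset := ⟨hlnn, hθl, hcon⟩
      rw [hKe] at this
      exact this
    · obtain ⟨l0, hl0K, hl0min⟩ := hKcomp.exists_isMinOn hKne hθE.continuousOn
      have hfl0 : fStar < θ (fun e => l0 e) := by
        rcases lt_or_ge fStar (θ (fun e => l0 e)) with h | h
        · exact h
        · exfalso
          have hl0Λ : l0 ∈ Λs := (hΛchar l0).2 ⟨hl0K.1, h⟩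
          have := hl0K.2.2
          rw [Metric.infDist_zero_of_mem hl0Λ] at this
          linarith
      refine ⟨min 1 ((θ (fun e => l0 e) - fStar)/2), lt_min one_pos (by linarith), min_le_left _ _,
        fun l hlnn hθl => ?_⟩
      by_contra hcon
      push_neg at hcon
      have hlK : l ∈ Kset := ⟨hlnn, by
        have := min_le_left (1:ℝ) ((θ (fun e => l0 e) - fStar)/2)
        linarith, hcon⟩
      have h1 : θ (fun e => l0 e) ≤ θ (fun e => l e) := hl0min hlK
      have h2 : min 1 ((θ (fun e => l0 e) - fStar)/2) ≤ (θ (fun e => l0 e) - fStar)/2 :=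
        min_le_right _ _
      linarith
  obtain ⟨η, hηpos, hηle1, hgap⟩ := hgapex
  -- the step-size threshold
  set δ0 : ℝ := min (η/(G2+1)) (ε2/(2*(G+1))) with hδ0def
  have hδ0pos : 0 < δ0 := lt_min (by positivity) (by positivity)
  refine ⟨δ0, hδ0pos, ?_⟩
  intro lam x y δseq hδpos hupd hx hy hrule hlam0
  -- nonnegativity of multipliers
  have hlamnn : ∀ k e, 0 ≤ lam k e := by
    intro k
    induction k with
    | zero => exact hlam0
    | succ n ih => intro e; rw [hupd n e]; exact le_max_left _ _
  -- structure of iterates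
  choose τf hτf using hy
  set xv : ℕ → S → ℝ := fun k s => xdag s (γ s (fun e => lam k e)) with hxvdef
  have hyk : ∀ k, y k = fun t => if τf k (σ t) = t then xv k (σ t) else 0 := by
    intro k
    funext t
    rw [(hτf k).2 t, hx k (σ t)]
  have hpkD : ∀ k, ((xv k, y k) : (S → ℝ) × (T → ℝ)) ∈ D := by
    intro k
    rw [hyk k]
    exact pair_mem_D hm hD (xv k) (fun s => (hxdag s _).1) (τf k) (fun s => ((hτf k).1 s).1)
  have hLk : ∀ k, L (xv k) (y k) (fun e => lam k e) = θ (fun e => lam k e) := by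
    intro k
    rw [hyk k, pair_lag (γ := γ) hL _ (xv k) (τf k) (fun s => ((hτf k).1 s).1)
      (fun s => ((hτf k).1 s).2)]
    exact (theta_formula hm hD hL hγ hxdag hθ _).symm
  -- bounded subgradients
  have hgb : ∀ k, ∑ e, (c e - ∑ t, H e t * y k t)^2 ≤ G2 := by
    intro k
    refine Finset.sum_le_sum fun e _ => ?_
    have hHyb := Hy_bounds hH hD (xv k, y k) (hpkD k) e
    have hlo : 0 ≤ ∑ t, H e t * y k t := hHyb.1
    have hhi : ∑ t, H e t * y k t ≤ B := hHyb.2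
    have habs : |c e - ∑ t, H e t * y k t| ≤ c e + B := by
      rw [abs_le]
      constructor <;> nlinarith [(hc e).le, hB0]
    calc (c e - ∑ t, H e t * y k t)^2 = |c e - ∑ t, H e t * y k t|^2 := (sq_abs _).symm
      _ ≤ (c e + B)^2 := by nlinarith [abs_nonneg (c e - ∑ t, H e t * y k t)]
  -- the basic recursion
  have hstep : ∀ k, ∀ lstar : EuclideanSpace ℝ E, lstar ∈ Λs →
      ∑ e, (lam (k+1) e - lstar e)^2 ≤ ∑ e, (lam k e - lstar e)^2
        - 2 * δseq k * (θ (fun e => lam k e) - fStar) + (δseq k)^2 * G2 := by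
    intro k lstar hlstar
    have hlc := (hΛchar lstar).1 hlstar
    -- subgradient inequality
    have hsg : θ (fun e => lam k e) - fStar
        ≤ ∑ e, (c e - ∑ t, H e t * y k t) * (lam k e - lstar e) := by
      have h1 : L (xv k) (y k) (fun e => lstar e) ≤ θ (fun e => lstar e) :=
        (hθ _).2 ⟨(xv k, y k), hpkD k, rfl⟩
      have h2 : θ (fun e => lstar e) = fStar := hΛfS lstar hlstar
      have h3 : L (xv k) (y k) (fun e => lstar e) - L (xv k) (y k) (fun e => lam k e)
          = ∑ e, (lstar e - lam k e) * (c e - ∑ t, H e t * y k t) := by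
        rw [hL, hL]
        have h3' : ∑ e, (lstar e - lam k e) * (c e - ∑ t, H e t * y k t)
            = ∑ e, lstar e * (c e - ∑ t, H e t * y k t)
              - ∑ e, lam k e * (c e - ∑ t, H e t * y k t) := by
          rw [← Finset.sum_sub_distrib]
          exact Finset.sum_congr rfl fun e _ => by ring
        rw [h3']
        ring
      have h4 := hLk k
      have h5 : ∑ e, (c e - ∑ t, H e t * y k t) * (lam k e - lstar e)
          = - ∑ e, (lstar e - lam k e) * (c e - ∑ t, H e t * y k t) := by
        rw [← Finset.sum_neg_distrib]
        exact Finset.sum_congr rfl fun e _ => by ring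
      rw [h5]
      linarith
    have hsum : ∑ e, (lam (k+1) e - lstar e)^2
        ≤ ∑ e, ((lam k e - lstar e)^2
          - 2*(δseq k)*(c e - ∑ t, H e t * y k t)*(lam k e - lstar e)
          + (δseq k)^2*(c e - ∑ t, H e t * y k t)^2) := by
      refine Finset.sum_le_sum fun e _ => ?_
      rw [hupd k e]
      exact proj_step (hlc.1 e)
    rw [Finset.sum_add_distrib, Finset.sum_sub_distrib] at hsum
    have hb' : ∑ e, 2*(δseq k)*(c e - ∑ t, H e t * y k t)*(lam k e - lstar e)
        = 2*(δseq k) * ∑ e, (c e - ∑ t, H e t * y k t)*(lam k e - lstar e) := by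
      rw [Finset.mul_sum]
      exact Finset.sum_congr rfl fun e _ => by ring
    have hc' : ∑ e, (δseq k)^2*(c e - ∑ t, H e t * y k t)^2
        = (δseq k)^2 * ∑ e, (c e - ∑ t, H e t * y k t)^2 := by
      rw [Finset.mul_sum]
    rw [hb', hc'] at hsum
    have e1 : 2*(δseq k)*(θ (fun e => lam k e) - fStar)
        ≤ 2*(δseq k) * ∑ e, (c e - ∑ t, H e t * y k t)*(lam k e - lstar e) :=
      mul_le_mul_of_nonneg_left hsg (by linarith [(hδpos k).le])
    have e2 : (δseq k)^2 * ∑ e, (c e - ∑ t, H e t * y k t)^2 ≤ (δseq k)^2 * G2 :=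
      mul_le_mul_of_nonneg_left (hgb k) (sq_nonneg _)
    linarith
  -- unified step size facts
  have hsmall : ∃ K1 : ℕ, ∀ k, K1 ≤ k → δseq k ≤ δ0 := by
    rcases hrule with ⟨_, hlt⟩ | ⟨_, htend0, _⟩
    · exact ⟨0, fun k _ => (hlt k).le⟩
    · have hev : ∀ᶠ k in Filter.atTop, δseq k < δ0 := htend0 (Iio_mem_nhds hδ0pos)
      obtain ⟨N, hN⟩ := Filter.eventually_atTop.1 hev
      exact ⟨N, fun k hk => (hN k hk).le⟩
  have hdiv : ∀ K2 : ℕ, ∀ C : ℝ, ∃ n : ℕ, C < ∑ u ∈ Finset.Ico K2 (K2+n), δseq u := by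
    intro K2 C
    rcases hrule with ⟨⟨K, δc, hδcpos, hconst⟩, _⟩ | ⟨_, _, htendsum⟩
    · set K3 := max K2 K with hK3
      set q := Nat.ceil (C / δc) with hq
      refine ⟨(K3 - K2) + (q+1), ?_⟩
      have hK2K3 : K2 ≤ K3 := le_max_left _ _
      have hKK3 : K ≤ K3 := le_max_right _ _
      have htop : K2 + ((K3 - K2) + (q+1)) = K3 + (q+1) := by omega
      rw [htop]
      have hsplit : ∑ u ∈ Finset.Ico K2 K3, δseq u + ∑ u ∈ Finset.Ico K3 (K3+(q+1)), δseq u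
          = ∑ u ∈ Finset.Ico K2 (K3+(q+1)), δseq u :=
        Finset.sum_Ico_consecutive _ hK2K3 (by omega)
      have h1 : 0 ≤ ∑ u ∈ Finset.Ico K2 K3, δseq u :=
        Finset.sum_nonneg fun u _ => (hδpos u).le
      have h2 : ∑ u ∈ Finset.Ico K3 (K3+(q+1)), δseq u = ((q+1 : ℕ) : ℝ) * δc := by
        rw [Finset.sum_congr rfl fun u hu => hconst u (by
          rw [Finset.mem_Ico] at hu; omega)]
        rw [Finset.sum_const, Nat.card_Ico, nsmul_eq_mul]
        congr 2
        omega
      have h3 : C < ((q+1 : ℕ) : ℝ) * δc := by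
        have h4 := Nat.le_ceil (C / δc)
        have hC : C ≤ (q : ℝ) * δc := by
          rw [← div_le_iff₀ hδcpos]
          exact h4
        push_cast
        nlinarith [hδcpos]
      linarith [hsplit, h1, h2]
    · have hev := htendsum.eventually_gt_atTop (C + ∑ u ∈ Finset.range K2, δseq u)
      obtain ⟨N, hN⟩ := Filter.eventually_atTop.1 hev
      set k1 := max N K2 with hk1
      refine ⟨(k1+1) - K2, ?_⟩
      have hK2k1 : K2 ≤ k1 := le_max_right _ _
      have htop : K2 + ((k1+1) - K2) = k1+1 := by omega
      rw [htop]
      have hsum := hN k1 (le_max_left _ _)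
      have hIco : ∑ u ∈ Finset.Ico K2 (k1+1), δseq u
          = ∑ u ∈ Finset.range (k1+1), δseq u - ∑ u ∈ Finset.range K2, δseq u :=
        Finset.sum_Ico_eq_sub _ (by omega)
      rw [hIco]
      linarith
  have hδG2fact : ∀ k, δseq k ≤ δ0 → δseq k * G2 ≤ η := by
    intro k hk
    have h5 : δ0 ≤ η/(G2+1) := min_le_left _ _
    have h6 : δseq k * (G2+1) ≤ η := by
      rw [← le_div_iff₀ (by positivity : (0:ℝ) < G2+1)]
      linarith
    nlinarith [(hδpos k).le, hG2nn]
  -- claim A: the dual value gets within η of the optimum beyond any index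
  have hclaimA : ∀ K' : ℕ, ∃ k0 : ℕ, K' ≤ k0 ∧ θ (fun e => lam k0 e) ≤ fStar + η := by
    intro K'
    by_contra hcon
    push_neg at hcon
    obtain ⟨K1, hK1⟩ := hsmall
    set K2 := max K' K1 with hK2
    have hdec : ∀ k, K2 ≤ k →
        ∑ e, (lam (k+1) e - μ0E e)^2 ≤ ∑ e, (lam k e - μ0E e)^2 - δseq k * η := by
      intro k hk
      have h1 := hstep k μ0E hμ0mem
      have h2 : fStar + η < θ (fun e => lam k e) := hcon k (le_trans (le_max_left _ _) hk)
      have h3 : δseq k ≤ δ0 := hK1 k (le_trans (le_max_right _ _) hk)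
      have h4 : δseq k * G2 ≤ η := hδG2fact k h3
      nlinarith [(hδpos k).le, h1, mul_le_mul_of_nonneg_left h4 (hδpos k).le,
        mul_lt_mul_of_pos_left h2 (hδpos k)]
    have hind : ∀ n : ℕ, ∑ e, (lam (K2+n) e - μ0E e)^2
        ≤ ∑ e, (lam K2 e - μ0E e)^2 - η * ∑ u ∈ Finset.Ico K2 (K2+n), δseq u := by
      intro n
      induction n with
      | zero => simp
      | succ n ih =>
        have h1 := hdec (K2+n) (by omega)
        have h2 : K2 + (n+1) = (K2+n)+1 := by omega
        rw [h2, Finset.sum_Ico_succ_top (by omega : K2 ≤ K2+n)]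
        have h3 : η * (∑ u ∈ Finset.Ico K2 (K2+n), δseq u + δseq (K2+n))
            = η * ∑ u ∈ Finset.Ico K2 (K2+n), δseq u + η * δseq (K2+n) := by ring
        rw [h3]
        nlinarith [h1, ih]
    obtain ⟨n, hn⟩ := hdiv K2 ((∑ e, (lam K2 e - μ0E e)^2) / η)
    have h1 := hind n
    have h2 : 0 ≤ ∑ e, (lam (K2+n) e - μ0E e)^2 := Finset.sum_nonneg fun e _ => sq_nonneg _
    rw [div_lt_iff₀ hηpos] at hn
    nlinarith [hn, h1, h2]
  obtain ⟨K1, hK1⟩ := hsmall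
  obtain ⟨k0, hk0ge, hk0θ⟩ := hclaimA K1
  -- squared distances vs metric distances
  have hq_eq : ∀ (k : ℕ) (lh : EuclideanSpace ℝ E),
      ∑ e, (lam k e - lh e)^2 = (dist (lam k) lh)^2 := by
    intro k lh
    rw [eudist_eq, Real.sq_sqrt (Finset.sum_nonneg fun e _ => sq_nonneg _)]
  -- one step never increases the distance too much
  have hstepL : ∀ k, K1 ≤ k →
      Metric.infDist (lam (k+1)) Λs ≤ Metric.infDist (lam k) Λs + δ0 * G := by
    intro k hk
    obtain ⟨lh, hlhΛ, hlhd⟩ := hΛcomp.exists_infDist_eq_dist hΛne (lam k)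
    have h1 := hstep k lh hlhΛ
    have h2 : fStar ≤ θ (fun e => lam k e) := hweak _ (hlamnn k)
    have h3 : ∑ e, (lam (k+1) e - lh e)^2 ≤ (dist (lam k) lh)^2 + (δseq k)^2 * G2 := by
      rw [← hq_eq k lh]
      nlinarith [h1, (hδpos k).le]
    have hδk : δseq k ≤ δ0 := hK1 k hk
    have h4 : (dist (lam k) lh)^2 + (δseq k)^2*G2 ≤ (dist (lam k) lh + δ0*G)^2 := by
      have hδG : (δseq k)^2 * G2 ≤ (δ0*G)^2 := by
        have hsq : (δseq k)^2 ≤ δ0^2 := by nlinarith [hδk, (hδpos k).le]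
        have hG2G' : (δ0*G)^2 = δ0^2 * G2 := by rw [mul_pow, hG2G]
        rw [hG2G']
        exact mul_le_mul_of_nonneg_right hsq hG2nn
      nlinarith [hδG, dist_nonneg (x := lam k) (y := lh), hδ0pos.le, hGnn,
        mul_nonneg (dist_nonneg (x := lam k) (y := lh)) (mul_nonneg hδ0pos.le hGnn)]
    have h7 : 0 ≤ dist (lam k) lh + δ0*G :=
      add_nonneg dist_nonneg (mul_nonneg hδ0pos.le hGnn)
    have h5 : dist (lam (k+1)) lh ≤ dist (lam k) lh + δ0*G := by
      have h6 : (dist (lam (k+1)) lh)^2 ≤ (dist (lam k) lh + δ0*G)^2 := by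
        rw [← hq_eq (k+1) lh]
        linarith
      nlinarith [dist_nonneg (x := lam (k+1)) (y := lh)]
    calc Metric.infDist (lam (k+1)) Λs ≤ dist (lam (k+1)) lh :=
          Metric.infDist_le_dist_of_mem hlhΛ
      _ ≤ dist (lam k) lh + δ0*G := h5
      _ = Metric.infDist (lam k) Λs + δ0*G := by rw [hlhd]
  -- one step decreases the distance when the dual value is bad
  have hstepR : ∀ k, K1 ≤ k → fStar + η < θ (fun e => lam k e) →
      Metric.infDist (lam (k+1)) Λs ≤ Metric.infDist (lam k) Λs := by
    intro k hk hθk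
    obtain ⟨lh, hlhΛ, hlhd⟩ := hΛcomp.exists_infDist_eq_dist hΛne (lam k)
    have h1 := hstep k lh hlhΛ
    have hδk : δseq k ≤ δ0 := hK1 k hk
    have h4 : δseq k * G2 ≤ η := hδG2fact k hδk
    have h3 : ∑ e, (lam (k+1) e - lh e)^2 ≤ (dist (lam k) lh)^2 := by
      rw [← hq_eq k lh]
      nlinarith [h1, (hδpos k).le, mul_lt_mul_of_pos_left hθk (hδpos k),
        mul_le_mul_of_nonneg_left h4 (hδpos k).le]
    have h5 : dist (lam (k+1)) lh ≤ dist (lam k) lh := by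
      have h6 : (dist (lam (k+1)) lh)^2 ≤ (dist (lam k) lh)^2 := by
        rw [← hq_eq (k+1) lh]
        linarith
      nlinarith [dist_nonneg (x := lam (k+1)) (y := lh),
        dist_nonneg (x := lam k) (y := lh)]
    calc Metric.infDist (lam (k+1)) Λs ≤ dist (lam (k+1)) lh :=
          Metric.infDist_le_dist_of_mem hlhΛ
      _ ≤ dist (lam k) lh := h5
      _ = Metric.infDist (lam k) Λs := by rw [hlhd]
  have hδ0G : δ0 * G < ε2/2 := by
    have h1 : δ0 ≤ ε2/(2*(G+1)) := min_le_right _ _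
    have h0 : δ0 * G ≤ ε2/(2*(G+1)) * G := mul_le_mul_of_nonneg_right h1 hGnn
    have h2 : ε2/(2*(G+1)) * G < ε2/2 := by
      rw [div_mul_eq_mul_div, div_lt_div_iff₀ (by positivity) (by norm_num : (0:ℝ) < 2)]
      nlinarith [hGnn, hε2pos]
    linarith
  -- the invariant: after k0 the multipliers stay ε2-close to the optimal set
  have hmain : ∀ n : ℕ, Metric.infDist (lam (k0 + n)) Λs < ε2 := by
    intro n
    induction n with
    | zero =>
      have h := hgap (lam k0) (hlamnn k0) hk0θ
      have h0 : k0 + 0 = k0 := rfl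
      rw [h0]
      linarith
    | succ n ih =>
      have hkk : K1 ≤ k0 + n := le_trans hk0ge (by omega)
      have hsucc : k0 + (n+1) = (k0+n)+1 := by omega
      by_cases hcase : θ (fun e => lam (k0+n) e) ≤ fStar + η
      · have hA := hgap (lam (k0+n)) (hlamnn _) hcase
        have hB := hstepL (k0+n) hkk
        rw [hsucc]
        linarith
      · push_neg at hcase
        have hB := hstepR (k0+n) hkk hcase
        rw [hsucc]
        linarith
  refine ⟨k0, fun k hk => ?_⟩
  obtain ⟨n, rfl⟩ := Nat.exists_eq_add_of_le hk
  have h1 := hmain n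
  constructor
  · exact lt_of_lt_of_le h1 (min_le_right r ε)
  · have hxeq : x (k0+n) = ΦE (lam (k0+n)) := by
      rw [WithLp.ext_iff]
      funext s
      exact hx (k0+n) s
    rw [hxeq]
    exact hrprop _ (lt_of_lt_of_le h1 (min_le_left r ε))
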